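/- (Symmetry of values for an irreducible Gorenstein curve; generalization of Kunz's theorem.) For every fractional ideal I of O and every v ∈ ℤ: v ∈ val(I^∨) if and only if c − v − 1 ∉ val(I). -/

import Mathlib

open scoped Classical

set_option synthInstance.maxHeartbeats 1000000
set_option maxHeartbeats 1000000

noncomputable section

/-- The `t`-adic order of a Laurent series, with `⊤` for the zero series. -/
def valC (g : LaurentSeries ℂ) : WithTop ℤ :=
  if g = 0 then ⊤ else (g.order : WithTop ℤ)

lemma smul_eq_algebraMap_mul1 (c : ℂ) (x : LaurentSeries ℂ) :
    c • x = algebraMap ℂ (LaurentSeries ℂ) c * x := by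
  rw [HahnSeries.algebraMap_apply', PowerSeries.algebraMap_apply,
      Algebra.algebraMap_self, RingHom.id_apply, HahnSeries.ofPowerSeries_C, HahnSeries.C_apply,
      HahnSeries.single_zero_mul_eq_smul]

/-- The set `t^α·O~` of Laurent series whose coefficients in degrees below `α`
vanish (equivalently, of `t`-adic order at least `α`), as a `ℂ`-submodule.
For `α = 0` this is `O~ = ℂ[[t]]` itself. -/
def stdMod1 (α : ℤ) : Submodule ℂ (LaurentSeries ℂ) where
  carrier := {g | ∀ j : ℤ, j < α → g.coeff j = 0}
  add_mem' := by
    intro a b ha hb j hj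
    simp [HahnSeries.coeff_add, ha j hj, hb j hj]
  zero_mem' := by
    intro j hj
    simp
  smul_mem' := by
    intro c a ha j hj
    simp [HahnSeries.coeff_smul, ha j hj]

/-- The dual `S^∨ = {h ∈ K : h·S ⊆ O}` of a subset `S`, as a `ℂ`-submodule. -/
def dualMod1 (O : Subalgebra ℂ (LaurentSeries ℂ)) (S : Set (LaurentSeries ℂ)) :
    Submodule ℂ (LaurentSeries ℂ) where
  carrier := {h | ∀ g ∈ S, h * g ∈ O}
  add_mem' := by
    intro a b ha hb g hg
    simpa [add_mul] using add_mem (ha g hg) (hb g hg)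
  zero_mem' := by
    intro g hg
    simpa using O.zero_mem
  smul_mem' := by
    intro c a ha g hg
    rw [smul_eq_algebraMap_mul1, mul_assoc]
    exact O.mul_mem (O.algebraMap_mem c) (ha g hg)

/-- `val(S)`: the values of the nonzero elements of `S`. -/
def vals1 (S : Set (LaurentSeries ℂ)) : Set ℤ :=
  {v | ∃ g ∈ S, valC g = (v : WithTop ℤ)}

/-- `I` is a fractional ideal of `O`: an `O`-stable `ℂ`-submodule of `K` which
is finitely generated over `O` and contains a nonzero element. -/
def IsFracIdeal1 (O : Subalgebra ℂ (LaurentSeries ℂ))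
    (I : Submodule ℂ (LaurentSeries ℂ)) : Prop :=
  (∀ a ∈ O, ∀ x ∈ I, a * x ∈ I) ∧
  (∃ s : Finset (LaurentSeries ℂ), (↑s : Set (LaurentSeries ℂ)) ⊆ (I : Set (LaurentSeries ℂ)) ∧
    ∀ x ∈ I, ∃ a : LaurentSeries ℂ → LaurentSeries ℂ,
      (∀ g ∈ s, a g ∈ O) ∧ x = ∑ g ∈ s, a g * g) ∧
  (∃ g ∈ I, g ≠ 0)

/-- `dim_ℂ (B / A)`: the dimension of the image of `B` in `K ⧸ A`. -/
def qdim1 (A B : Submodule ℂ (LaurentSeries ℂ)) : ℕ :=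
  Module.finrank ℂ ↥(B.map A.mkQ)

namespace Aux
abbrev K := LaurentSeries ℂ
abbrev tt (n : ℤ) : K := HahnSeries.single n (1:ℂ)

lemma tt_ne_zero (n : ℤ) : tt n ≠ 0 := HahnSeries.single_ne_zero one_ne_zero
lemma tt_order (n : ℤ) : (tt n).order = n := HahnSeries.order_single one_ne_zero
lemma tt_coeff (n j : ℤ) : (tt n).coeff j = if j = n then 1 else 0 := by
  rw [HahnSeries.coeff_single]; congr 1

lemma mem_stdMod_iff {α : ℤ} {g : K} : g ∈ stdMod1 α ↔ ∀ j : ℤ, j < α → g.coeff j = 0 :=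
  Iff.rfl

lemma valC_eq_iff {g : K} {v : ℤ} :
    valC g = (v : WithTop ℤ) ↔ (∀ j : ℤ, j < v → g.coeff j = 0) ∧ g.coeff v ≠ 0 := by
  by_cases hg : g = 0
  · subst hg
    simp [valC]
  · simp only [valC, if_neg hg, WithTop.coe_inj]
    constructor
    · rintro rfl
      exact ⟨fun j hj => HahnSeries.coeff_eq_zero_of_lt_order hj, (HahnSeries.coeff_order_eq_zero.not.mpr hg)⟩
    · rintro ⟨h1, h2⟩
      have hle : g.order ≤ v := HahnSeries.order_le_of_coeff_ne_zero h2
      rcases lt_or_eq_of_le hle with h | h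
      · exact absurd (h1 _ h) ((HahnSeries.coeff_order_eq_zero.not.mpr hg))
      · exact h

lemma mem_stdMod_of_valC_ge {α : ℤ} {g : K} (h : (α : WithTop ℤ) ≤ valC g) :
    g ∈ stdMod1 α := by
  intro j hj
  by_cases hg : g = 0
  · simp [hg]
  · rw [valC, if_neg hg, WithTop.coe_le_coe] at h
    exact HahnSeries.coeff_eq_zero_of_lt_order (lt_of_lt_of_le hj h)

lemma valC_ge_of_mem_stdMod {α : ℤ} {g : K} (h : g ∈ stdMod1 α) :
    (α : WithTop ℤ) ≤ valC g := by
  by_cases hg : g = 0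
  · simp [valC, hg]
  · rw [valC, if_neg hg, WithTop.coe_le_coe]
    by_contra hlt
    push_neg at hlt
    exact (HahnSeries.coeff_order_eq_zero.not.mpr hg) (h _ hlt)

lemma stdMod_mul {a b : ℤ} {g h : K} (hg : g ∈ stdMod1 a) (hh : h ∈ stdMod1 b) :
    g * h ∈ stdMod1 (a + b) := by
  by_cases h0 : g = 0; · simp [h0, Submodule.zero_mem]
  by_cases h1 : h = 0; · simp [h1, Submodule.zero_mem]
  apply mem_stdMod_of_valC_ge
  have := HahnSeries.order_mul h0 h1
  rw [valC, if_neg (mul_ne_zero h0 h1), this]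
  have ha := valC_ge_of_mem_stdMod hg
  have hb := valC_ge_of_mem_stdMod hh
  rw [valC, if_neg h0, WithTop.coe_le_coe] at ha
  rw [valC, if_neg h1, WithTop.coe_le_coe] at hb
  exact_mod_cast add_le_add ha hb

lemma tt_mul_tt (a b : ℤ) : tt a * tt b = tt (a + b) := by
  rw [HahnSeries.single_mul_single, one_mul]

lemma tt_mem_stdMod {α n : ℤ} (h : α ≤ n) : tt n ∈ stdMod1 α := by
  intro j hj
  rw [tt_coeff, if_neg]
  omega

section Dual
variable {O : Subalgebra ℂ K} {c : ℕ}
  (hc : dualMod1 O (stdMod1 0 : Set K) = stdMod1 (c : ℤ))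

include hc

lemma tcO_le {g : K} (hg : g ∈ stdMod1 (c : ℤ)) : g ∈ O := by
  rw [← hc] at hg
  have h1 : (1 : K) ∈ stdMod1 0 := by
    intro j hj
    rw [HahnSeries.coeff_one, if_neg]
    omega
  simpa using hg 1 h1

lemma dual_stdMod (α : ℤ) :
    dualMod1 O (stdMod1 α : Set K) = stdMod1 ((c : ℤ) - α) := by
  apply le_antisymm
  · intro h hh
    have key : h * tt α ∈ stdMod1 (c : ℤ) := by
      rw [← hc]
      intro g hg
      have : tt α * g ∈ stdMod1 α := by
        simpa using stdMod_mul (tt_mem_stdMod le_rfl) hg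
      rw [mul_assoc]
      exact hh _ this
    have := stdMod_mul key (tt_mem_stdMod (le_refl (-α)))
    have heq : h * tt α * tt (-α) = h := by
      rw [mul_assoc, tt_mul_tt, add_neg_cancel]
      ext j
      simpa [tt_coeff] using (HahnSeries.mul_single_coeff_add (r := (1:ℂ)) (x := h) (a := j) (b := (0:ℤ))).symm
    rw [heq] at this
    simpa [sub_eq_add_neg] using this
  · intro h hh g hg
    apply tcO_le hc
    have := stdMod_mul hh hg
    simpa using this

omit hc in
lemma dual_antitone {S T : Set K} (hST : S ⊆ T) :
    dualMod1 O T ≤ dualMod1 O S := by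
  intro h hh g hg
  exact hh g (hST hg)

omit hc in
lemma dual_sup (A B : Submodule ℂ K) :
    dualMod1 O ((A ⊔ B : Submodule ℂ K) : Set K) =
      dualMod1 O (A : Set K) ⊓ dualMod1 O (B : Set K) := by
  apply le_antisymm
  · exact le_inf (dual_antitone (SetLike.coe_subset_coe.mpr le_sup_left))
      (dual_antitone (SetLike.coe_subset_coe.mpr le_sup_right))
  · rintro h ⟨h1, h2⟩ g hg
    rcases Submodule.mem_sup.mp hg with ⟨x, hx, y, hy, rfl⟩
    rw [mul_add]
    exact O.add_mem (h1 x hx) (h2 y hy)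

end Dual
end Aux
namespace Aux

lemma sum_coeff {σ : Type*} (s : Finset σ) (f : σ → K) (i : ℤ) :
    (∑ j ∈ s, f j).coeff i = ∑ j ∈ s, (f j).coeff i :=
  map_sum (HahnSeries.coeff.addMonoidHom i) f s

lemma single_eq_smul_tt (m : ℤ) (z : ℂ) :
    HahnSeries.single m z = algebraMap ℂ K z * tt m := by
  rw [← smul_eq_algebraMap_mul1]
  ext i
  rw [HahnSeries.coeff_smul, tt_coeff, HahnSeries.coeff_single]
  split <;> simp

lemma tt_zero : tt 0 = 1 := HahnSeries.single_zero_one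

/-- the finite-generation-over-`O` property from `IsFracIdeal1` -/
def FgOver (O : Subalgebra ℂ K) (M : Submodule ℂ K) : Prop :=
  ∃ s : Finset K, (↑s : Set K) ⊆ (M : Set K) ∧
    ∀ x ∈ M, ∃ a : K → K, (∀ g ∈ s, a g ∈ O) ∧ x = ∑ g ∈ s, a g * g

section fg
variable {O : Subalgebra ℂ K} {c : ℕ}
  (hc : dualMod1 O (stdMod1 0 : Set K) = stdMod1 (c : ℤ))

include hc

lemma fg_stdMod (α : ℤ) : FgOver O (stdMod1 α) := by
  classical
  have hinj : Function.Injective (fun j : ℕ => tt (α + j)) := by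
    intro a b hab
    have := congrArg HahnSeries.order hab
    simp only [tt_order] at this
    omega
  refine ⟨(Finset.range (c+1)).image (fun j : ℕ => tt (α + j)), ?_, ?_⟩
  · intro g hg
    simp only [Finset.coe_image, Set.mem_image, Finset.mem_coe, Finset.mem_range] at hg
    obtain ⟨j, _, rfl⟩ := hg
    exact tt_mem_stdMod (by omega)
  · intro x hx
    set T : K := ∑ j ∈ Finset.range (c+1), HahnSeries.single (α + (j:ℤ)) (x.coeff (α + j)) with hT
    set r : K := x - T with hr
    have hrmem : r ∈ stdMod1 (α + (c:ℤ) + 1) := by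
      intro i hi
      rw [hr, HahnSeries.coeff_sub, hT, sum_coeff]
      by_cases hi2 : i < α
      · rw [hx i hi2, Finset.sum_eq_zero, sub_zero]
        intro j hj
        rw [HahnSeries.coeff_single, if_neg (by omega)]
      · push_neg at hi2
        have hmem : (i - α).toNat ∈ Finset.range (c+1) := by
          simp only [Finset.mem_range]; omega
        rw [Finset.sum_eq_single_of_mem _ hmem, HahnSeries.coeff_single,
          if_pos (by omega)]
        · have : α + ((i - α).toNat : ℤ) = i := by omega
          rw [this, sub_self]
        · intro j hj hne
          rw [HahnSeries.coeff_single, if_neg]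
          intro hcon
          apply hne
          omega
    set a : K → K := fun g =>
      if g.order = α then algebraMap ℂ K (x.coeff α) + r * tt (-α)
      else algebraMap ℂ K (x.coeff g.order) with ha
    have hrtt : r * tt (-α) ∈ O := by
      apply tcO_le hc
      have := stdMod_mul hrmem (tt_mem_stdMod (le_refl (-α)))
      have h2 : α + (c:ℤ) + 1 + -α = (c:ℤ) + 1 := by ring
      rw [h2] at this
      exact mem_stdMod_of_valC_ge (le_trans (by exact_mod_cast by omega)
        (valC_ge_of_mem_stdMod this))
    refine ⟨a, ?_, ?_⟩
    · intro g hg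
      rw [ha]
      dsimp only
      split
      · exact O.add_mem (O.algebraMap_mem _) hrtt
      · exact O.algebraMap_mem _
    · rw [Finset.sum_image (fun a _ b _ h => hinj h)]
      have key : ∀ j ∈ Finset.range (c+1),
          a (tt (α + (j:ℤ))) * tt (α + (j:ℤ)) =
            HahnSeries.single (α + (j:ℤ)) (x.coeff (α + j)) + (if j = 0 then r else 0) := by
        intro j hj
        rw [ha]
        dsimp only
        rw [tt_order]
        by_cases hj0 : j = 0
        · subst hj0
          rw [if_pos (by omega), if_pos rfl]
          push_cast
          rw [add_zero, add_mul, mul_assoc, tt_mul_tt, neg_add_cancel, tt_zero,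
            mul_one, ← single_eq_smul_tt]
        · rw [if_neg (by omega), if_neg hj0, add_zero, ← single_eq_smul_tt]
      rw [Finset.sum_congr rfl key, Finset.sum_add_distrib, ← hT,
        Finset.sum_ite_eq' (Finset.range (c+1)) 0 (fun _ => r),
        if_pos (by simp), hr]
      ring

omit hc in
lemma fg_sup {A B : Submodule ℂ K} (hA : FgOver O A) (hB : FgOver O B) :
    FgOver O (A ⊔ B) := by
  classical
  obtain ⟨s₁, hs₁, hgen₁⟩ := hA
  obtain ⟨s₂, hs₂, hgen₂⟩ := hB
  refine ⟨s₁ ∪ s₂, ?_, ?_⟩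
  · intro g hg
    rcases Finset.mem_union.mp (by exact_mod_cast hg) with h | h
    · exact (le_sup_left : A ≤ A ⊔ B) (hs₁ h)
    · exact (le_sup_right : B ≤ A ⊔ B) (hs₂ h)
  · intro x hx
    rcases Submodule.mem_sup.mp hx with ⟨x₁, hx₁, x₂, hx₂, rfl⟩
    obtain ⟨a₁, ha₁, he₁⟩ := hgen₁ x₁ hx₁
    obtain ⟨a₂, ha₂, he₂⟩ := hgen₂ x₂ hx₂
    refine ⟨fun g => (if g ∈ s₁ then a₁ g else 0) + (if g ∈ s₂ then a₂ g else 0), ?_, ?_⟩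
    · intro g hg
      apply O.add_mem <;> [skip; skip] <;> split
      · exact ha₁ g ‹_›
      · exact O.zero_mem
      · exact ha₂ g ‹_›
      · exact O.zero_mem
    · have e1 : ∀ (s' : Finset K) (a' : K → K), s' ⊆ s₁ ∪ s₂ →
          (∑ g ∈ s₁ ∪ s₂, (if g ∈ s' then a' g else 0) * g) = ∑ g ∈ s', a' g * g := by
        intro s' a' hsub
        rw [← Finset.sum_subset hsub (fun g _ hg => by rw [if_neg hg, zero_mul])]
        exact Finset.sum_congr rfl (fun g hg => by rw [if_pos hg])
      have e2 : (∑ g ∈ s₁ ∪ s₂, ((if g ∈ s₁ then a₁ g else 0) + (if g ∈ s₂ then a₂ g else 0)) * g)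
          = (∑ g ∈ s₁ ∪ s₂, (if g ∈ s₁ then a₁ g else 0) * g)
            + ∑ g ∈ s₁ ∪ s₂, (if g ∈ s₂ then a₂ g else 0) * g := by
        rw [← Finset.sum_add_distrib]
        exact Finset.sum_congr rfl fun g _ => add_mul _ _ _
      rw [e2, e1 s₁ a₁ Finset.subset_union_left, e1 s₂ a₂ Finset.subset_union_right,
        ← he₁, ← he₂]

end fg
end Aux
namespace Aux

lemma stdMod_mono {α β : ℤ} (h : α ≤ β) : stdMod1 β ≤ stdMod1 α :=
  fun _ hg j hj => hg j (lt_of_lt_of_le hj h)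

lemma qdim_sup_span (A : Submodule ℂ K) (x : K) :
    qdim1 A (A ⊔ Submodule.span ℂ {x}) = if x ∈ A then 0 else 1 := by
  unfold qdim1
  have h1 : A.map A.mkQ = ⊥ := by
    rw [← LinearMap.le_ker_iff_map, Submodule.ker_mkQ]
  rw [Submodule.map_sup, h1, bot_sup_eq, Submodule.map_span, Set.image_singleton]
  by_cases hx : x ∈ A
  · rw [if_pos hx]
    have : A.mkQ x = 0 := (Submodule.Quotient.mk_eq_zero A).mpr hx
    rw [this, Submodule.span_zero_singleton, finrank_bot]
  · rw [if_neg hx]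
    exact finrank_span_singleton (by
      simpa [Submodule.Quotient.mk_eq_zero] using hx)

lemma qdim_of_coeff (E D : Submodule ℂ K) (hED : E ≤ D) (v : ℤ)
    (hE2 : ∀ e ∈ E, e.coeff v = 0)
    (hE : ∀ d ∈ D, d.coeff v = 0 → d ∈ E) :
    qdim1 E D = if ∃ h ∈ D, h.coeff v ≠ 0 then 1 else 0 := by
  unfold qdim1
  split
  · next hex =>
    obtain ⟨h, hD, hcv⟩ := hex
    have hmap : D.map E.mkQ = Submodule.span ℂ {E.mkQ h} := by
      apply le_antisymm
      · rintro y hy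
        obtain ⟨d, hd, rfl⟩ := Submodule.mem_map.mp hy
        have hmem : d - (d.coeff v / h.coeff v) • h ∈ E := by
          apply hE _ (Submodule.sub_mem D hd (Submodule.smul_mem D _ hD))
          rw [HahnSeries.coeff_sub, HahnSeries.coeff_smul, smul_eq_mul,
            div_mul_cancel₀ _ hcv, sub_self]
        rw [Submodule.mem_span_singleton]
        refine ⟨d.coeff v / h.coeff v, ?_⟩
        rw [← map_smul]
        symm
        rw [Submodule.mkQ_apply, Submodule.mkQ_apply, Submodule.Quotient.eq]
        exact hmem
      · rw [Submodule.span_singleton_le_iff_mem]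
        exact Submodule.mem_map_of_mem hD
    rw [hmap]
    apply finrank_span_singleton
    simp only [Submodule.mkQ_apply, ne_eq, Submodule.Quotient.mk_eq_zero]
    intro hcon
    exact hcv (hE2 h hcon)
  · next hex =>
    push_neg at hex
    have hmap : D.map E.mkQ = ⊥ := by
      rw [← LinearMap.le_ker_iff_map, Submodule.ker_mkQ]
      intro d hd
      exact hE d hd (hex d hd)
    rw [hmap, finrank_bot]

end Aux
namespace Aux

section frac
variable {O : Subalgebra ℂ K} {c : ℕ}
  (hO : (O : Set K) ⊆ (stdMod1 0 : Set K))
  (hc : dualMod1 O (stdMod1 0 : Set K) = stdMod1 (c : ℤ))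

include hO in
lemma stdMod_stable (α : ℤ) : ∀ a ∈ O, ∀ x ∈ stdMod1 α, a * x ∈ stdMod1 α := by
  intro a ha x hx
  simpa using stdMod_mul (hO ha) hx

include hO hc in
lemma isFrac_sup_stdMod {I : Submodule ℂ K} (hI : IsFracIdeal1 O I) (α : ℤ) :
    IsFracIdeal1 O (I ⊔ stdMod1 α) := by
  refine ⟨?_, fg_sup hI.2.1 (fg_stdMod hc α), tt α, ?_, tt_ne_zero α⟩
  · intro a ha x hx
    rcases Submodule.mem_sup.mp hx with ⟨x₁, hx₁, x₂, hx₂, rfl⟩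
    rw [mul_add]
    exact Submodule.add_mem _ (le_sup_left (a := I) (hI.1 a ha x₁ hx₁))
      (le_sup_right (a := I) (stdMod_stable hO α a ha x₂ hx₂))
  · exact le_sup_right (a := I) (tt_mem_stdMod le_rfl)

end frac
end Aux

/-- **Symmetry of values for an irreducible Gorenstein curve** (a generalization
of Kunz's theorem): `v ∈ val(I^∨)` iff `c − v − 1 ∉ val(I)`. -/
theorem symmetry_of_values_irreducible (O : Subalgebra ℂ (LaurentSeries ℂ))
    (hO : (O : Set (LaurentSeries ℂ)) ⊆ (stdMod1 0 : Set (LaurentSeries ℂ)))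
    (c : ℕ)
    (hc : dualMod1 O (stdMod1 0 : Set (LaurentSeries ℂ)) = stdMod1 (c : ℤ))
    (hG2 : ∀ I J : Submodule ℂ (LaurentSeries ℂ),
      IsFracIdeal1 O I → IsFracIdeal1 O J → I ≤ J →
      qdim1 I J = qdim1 (dualMod1 O (J : Set (LaurentSeries ℂ)))
        (dualMod1 O (I : Set (LaurentSeries ℂ))))
    (I : Submodule ℂ (LaurentSeries ℂ)) (hI : IsFracIdeal1 O I) (v : ℤ) :
    v ∈ vals1 ((dualMod1 O (I : Set (LaurentSeries ℂ)) :
        Submodule ℂ (LaurentSeries ℂ)) : Set (LaurentSeries ℂ)) ↔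
      (c : ℤ) - v - 1 ∉ vals1 (I : Set (LaurentSeries ℂ)) := by
  classical
  open Aux in
  set w : ℤ := (c : ℤ) - v - 1 with hw
  set A : Submodule ℂ K := I ⊔ stdMod1 (w + 1) with hA
  set B : Submodule ℂ K := I ⊔ stdMod1 w with hB
  have hAB : A ≤ B := sup_le_sup_left (stdMod_mono (by omega)) I
  have hfracA : IsFracIdeal1 O A := isFrac_sup_stdMod hO hc hI (w+1)
  have hfracB : IsFracIdeal1 O B := isFrac_sup_stdMod hO hc hI w
  -- B = A ⊔ span {tt w}
  have hBA : B = A ⊔ Submodule.span ℂ {tt w} := by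
    apply le_antisymm
    · refine sup_le (le_trans (le_sup_left (b := stdMod1 (w+1))) le_sup_left) ?_
      intro g hg
      have hsplit : g = (g - g.coeff w • tt w) + g.coeff w • tt w := by ring
      rw [hsplit]
      apply Submodule.add_mem
      · apply Submodule.mem_sup_left
        apply Submodule.mem_sup_right
        intro j hj
        rw [HahnSeries.coeff_sub, HahnSeries.coeff_smul, tt_coeff]
        rcases lt_or_eq_of_le (Int.lt_add_one_iff.mp hj) with h | h
        · rw [hg j h, if_neg (by omega)]
          simp
        · rw [if_pos h, h]
          simp
      · exact Submodule.mem_sup_right (Submodule.smul_mem _ _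
          (Submodule.mem_span_singleton_self _))
    · refine sup_le (le_trans hAB le_rfl) ?_
      rw [Submodule.span_singleton_le_iff_mem]
      exact Submodule.mem_sup_right (tt_mem_stdMod le_rfl)
  -- membership of tt w in A vs vals
  have htw : tt w ∈ A ↔ w ∈ vals1 (I : Set K) := by
    constructor
    · intro h
      rcases Submodule.mem_sup.mp h with ⟨x, hx, y, hy, hxy⟩
      refine ⟨x, hx, valC_eq_iff.mpr ⟨?_, ?_⟩⟩
      · intro j hj
        have := congrArg (fun z => HahnSeries.coeff z j) hxy
        simp only [HahnSeries.coeff_add] at this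
        rw [hy j (by omega), add_zero] at this
        rw [this, tt_coeff, if_neg (by omega)]
      · have := congrArg (fun z => HahnSeries.coeff z w) hxy
        simp only [HahnSeries.coeff_add] at this
        rw [hy w (by omega), add_zero] at this
        rw [this, tt_coeff, if_pos rfl]
        exact one_ne_zero
    · rintro ⟨g, hg, hval⟩
      obtain ⟨h1, h2⟩ := valC_eq_iff.mp hval
      have hsplit : tt w = (g.coeff w)⁻¹ • g + (tt w - (g.coeff w)⁻¹ • g) := by ring
      rw [hsplit]
      apply Submodule.add_mem
      · exact Submodule.mem_sup_left (Submodule.smul_mem _ _ hg)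
      · apply Submodule.mem_sup_right
        intro j hj
        rw [HahnSeries.coeff_sub, HahnSeries.coeff_smul, tt_coeff]
        rcases lt_or_eq_of_le (Int.lt_add_one_iff.mp hj) with h | h
        · rw [h1 j h, if_neg (by omega)]
          simp
        · rw [if_pos h, h, smul_eq_mul, inv_mul_cancel₀ h2, sub_self]
  -- dual computations
  have hdualA : dualMod1 O (A : Set K) = dualMod1 O (I : Set K) ⊓ stdMod1 v := by
    rw [hA, dual_sup, dual_stdMod hc]
    congr 2
    omega
  have hdualB : dualMod1 O (B : Set K) = dualMod1 O (I : Set K) ⊓ stdMod1 (v + 1) := by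
    rw [hB, dual_sup, dual_stdMod hc]
    congr 2
    omega
  have hED : dualMod1 O (B : Set K) ≤ dualMod1 O (A : Set K) := by
    rw [hdualA, hdualB]
    exact inf_le_inf_left _ (stdMod_mono (by omega))
  -- left side dimension
  have hqL : qdim1 A B = if tt w ∈ A then 0 else 1 := by
    rw [hBA]
    exact qdim_sup_span A (tt w)
  -- right side dimension
  have hqR : qdim1 (dualMod1 O (B : Set K)) (dualMod1 O (A : Set K)) =
      if ∃ h ∈ dualMod1 O (A : Set K), h.coeff v ≠ 0 then 1 else 0 := by
    apply qdim_of_coeff _ _ hED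
    · intro e he
      rw [hdualB] at he
      exact he.2 v (by omega)
    · intro d hd hdv
      rw [hdualA] at hd
      rw [hdualB]
      refine ⟨hd.1, ?_⟩
      intro j hj
      rcases lt_or_eq_of_le (Int.lt_add_one_iff.mp hj) with h | h
      · exact hd.2 j h
      · rw [h]; exact hdv
  have hexv : (∃ h ∈ dualMod1 O (A : Set K), h.coeff v ≠ 0) ↔
      v ∈ vals1 ((dualMod1 O (I : Set K) : Submodule ℂ K) : Set K) := by
    constructor
    · rintro ⟨h, hhD, hhv⟩
      rw [hdualA] at hhD
      exact ⟨h, hhD.1, valC_eq_iff.mpr ⟨fun j hj => hhD.2 j hj, hhv⟩⟩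
    · rintro ⟨h, hh, hval⟩
      obtain ⟨h1, h2⟩ := valC_eq_iff.mp hval
      refine ⟨h, ?_, h2⟩
      rw [hdualA]
      exact ⟨hh, fun j hj => h1 j hj⟩
  have hkey := hG2 A B hfracA hfracB hAB
  rw [hqL, hqR] at hkey
  constructor
  · intro hv hcon
    rw [← hexv] at hv
    rw [← htw] at hcon
    rw [if_pos hcon, if_pos hv] at hkey
    exact zero_ne_one hkey
  · intro hcon
    rw [← hexv]
    rw [← htw] at hcon
    rw [if_neg hcon] at hkey
    by_contra hv
    rw [if_neg hv] at hkey
    exact one_ne_zero hkey
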